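/- Let L/K be a finite Galois extension of local fields of the form k((t))/k((x)) with k algebraically closed of characteristic p, with Galois group a p-group G, ramification groups G_i, e := #G₀ = #G, d := ∑_{i≥0}(#G_i − 1), and d' := ∑_{i≥1}(#G_i − 1). If z ∈ L satisfies ord_L(z) ≥ −d', then tr_{L/K}(z) ∈ k[[x]]; moreover tr_{L/K}(z) is a unit in k[[x]] if and only if ord_L(z) = −d'. -/

import Mathlib

/- STATEMENT 4: L/K = k((t))/k((x)) a totally ramified Galois extension of local fields
(k algebraically closed of characteristic p) with Galois group a p-group G, ramification
groups G_i, e = #G₀ = #G, d = ∑_{i≥0}(#G_i − 1), d' = ∑_{i≥1}(#G_i − 1).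
If z ∈ L has ord_L(z) ≥ −d', then tr_{L/K}(z) ∈ k[[x]] (all coefficients in negative
degrees vanish), and tr_{L/K}(z) is a unit of k[[x]] iff ord_L(z) = −d'. -/

section ValAux
variable {L : Type*} [Field L] (v : L → ℤ)
  (hmul : ∀ a b : L, a ≠ 0 → b ≠ 0 → v (a * b) = v a + v b)
  (hmin : ∀ a b : L, a ≠ 0 → b ≠ 0 → a + b ≠ 0 → min (v a) (v b) ≤ v (a + b))

include hmul

lemma vaux_one : v 1 = 0 := by
  have := hmul 1 1 one_ne_zero one_ne_zero
  simp at this; omega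

lemma vaux_neg {a : L} (ha : a ≠ 0) : v (-a) = v a := by
  have h1 : v ((-1 : L) * (-1)) = v (-1) + v (-1) := hmul _ _ (by norm_num) (by norm_num)
  simp [vaux_one v hmul] at h1
  have := hmul (-1) a (by norm_num) ha
  simp only [neg_one_mul] at this
  omega

lemma vaux_pow {a : L} (ha : a ≠ 0) (n : ℕ) : v (a ^ n) = n * v a := by
  induction n with
  | zero => simpa using vaux_one v hmul
  | succ m ih =>
      rw [pow_succ, hmul _ _ (pow_ne_zero _ ha) ha, ih]
      push_cast; ring

lemma vaux_inv {a : L} (ha : a ≠ 0) : v a⁻¹ = - v a := by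
  have := hmul a a⁻¹ ha (inv_ne_zero ha)
  rw [mul_inv_cancel₀ ha, vaux_one v hmul] at this
  omega

lemma vaux_zpow {a : L} (ha : a ≠ 0) (n : ℤ) : v (a ^ n) = n * v a := by
  rcases n with m | m
  · simpa using vaux_pow v hmul ha m
  · rw [zpow_negSucc, vaux_inv v hmul (pow_ne_zero _ ha), vaux_pow v hmul ha,
      Int.negSucc_eq]
    push_cast; ring

lemma vaux_prod {ι : Type*} (s : Finset ι) (f : ι → L) (hf : ∀ i ∈ s, f i ≠ 0) :
    v (∏ i ∈ s, f i) = ∑ i ∈ s, v (f i) := by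
  classical
  induction s using Finset.induction_on with
  | empty => simpa using vaux_one v hmul
  | @insert a s hx' ih =>
      rw [Finset.prod_insert hx', Finset.sum_insert hx',
        hmul _ _ (hf a (Finset.mem_insert_self a s))
          (Finset.prod_ne_zero_iff.mpr fun i hi => hf i (Finset.mem_insert_of_mem hi)),
        ih fun i hi => hf i (Finset.mem_insert_of_mem hi)]

include hmin

lemma vaux_strict {a b : L} (ha : a ≠ 0) (hb : b ≠ 0) (h : v a < v b) :
    a + b ≠ 0 ∧ v (a + b) = v a := by
  have hne : a + b ≠ 0 := by
    intro h0
    rw [add_eq_zero_iff_eq_neg.mp h0, vaux_neg v hmul hb] at h; omega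
  refine ⟨hne, le_antisymm ?_ ?_⟩
  · by_contra hgt
    push_neg at hgt
    have h2 : v (a + b + (-b)) ≥ min (v (a + b)) (v (-b)) :=
      hmin _ _ hne (neg_ne_zero.mpr hb) (by simpa using ha)
    simp only [add_neg_cancel_right] at h2
    rw [vaux_neg v hmul hb] at h2
    omega
  · have := hmin a b ha hb hne; omega

omit hmul in
lemma vaux_sum_ge {ι : Type*} (s : Finset ι) (f : ι → L) (m : ℤ)
    (h : ∀ i ∈ s, f i = 0 ∨ m ≤ v (f i)) :
    (∑ i ∈ s, f i) = 0 ∨ m ≤ v (∑ i ∈ s, f i) := by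
  classical
  induction s using Finset.induction_on with
  | empty => simp
  | @insert a s hx' ih =>
      rw [Finset.sum_insert hx']
      rcases h a (Finset.mem_insert_self a s) with h0 | ha
      · rcases ih (fun i hi => h i (Finset.mem_insert_of_mem hi)) with h1 | h1
        · left; rw [h0, h1, add_zero]
        · rw [h0, zero_add]; right; exact h1
      · rcases ih (fun i hi => h i (Finset.mem_insert_of_mem hi)) with h1 | h1
        · rw [h1, add_zero]
          by_cases hfa : f a = 0
          · left; exact hfa
          · right; exact ha
        · by_cases hfa : f a = 0
          · rw [hfa, zero_add]
            by_cases hs : (∑ i ∈ s, f i) = 0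
            · left; exact hs
            · right; exact h1
          · by_cases hs : (∑ i ∈ s, f i) = 0
            · rw [hs, add_zero]; right; exact ha
            · by_cases hsum : f a + ∑ i ∈ s, f i = 0
              · left; exact hsum
              · right; exact le_trans (le_min ha h1) (hmin _ _ hfa hs hsum)

lemma vaux_sum_distinct {ι : Type*} (s : Finset ι) (f : ι → L)
    (hne : ∃ i ∈ s, f i ≠ 0)
    (hdist : ∀ i ∈ s, ∀ j ∈ s, f i ≠ 0 → f j ≠ 0 → v (f i) = v (f j) → i = j) :
    ∃ i₀ ∈ s, f i₀ ≠ 0 ∧ (∑ i ∈ s, f i) ≠ 0 ∧ v (∑ i ∈ s, f i) = v (f i₀) ∧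
      ∀ j ∈ s, f j ≠ 0 → v (f i₀) ≤ v (f j) := by
  classical
  obtain ⟨i₁, hi₁s, hi₁⟩ := hne
  obtain ⟨i₀, hi₀mem, hi₀min⟩ :=
    (s.filter (fun i => f i ≠ 0)).exists_min_image (fun i => v (f i))
      ⟨i₁, Finset.mem_filter.mpr ⟨hi₁s, hi₁⟩⟩
  rw [Finset.mem_filter] at hi₀mem
  obtain ⟨hi₀s, hi₀⟩ := hi₀mem
  have hminle : ∀ j ∈ s, f j ≠ 0 → v (f i₀) ≤ v (f j) := by
    intro j hj hfj
    exact hi₀min j (Finset.mem_filter.mpr ⟨hj, hfj⟩)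
  have hsum : ∑ i ∈ s, f i = f i₀ + ∑ i ∈ s.erase i₀, f i := by
    rw [Finset.add_sum_erase _ _ hi₀s]
  have hrest : (∑ i ∈ s.erase i₀, f i) = 0 ∨ v (f i₀) + 1 ≤ v (∑ i ∈ s.erase i₀, f i) := by
    apply vaux_sum_ge v hmin
    intro j hj
    by_cases hfj : f j = 0
    · left; exact hfj
    · right
      have hjs := Finset.mem_of_mem_erase hj
      have hjne := Finset.ne_of_mem_erase hj
      have := hminle j hjs hfj
      rcases lt_or_eq_of_le this with h | h
      · omega
      · exact absurd (hdist i₀ hi₀s j hjs hi₀ hfj h) (Ne.symm hjne)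
  by_cases hr0 : (∑ i ∈ s.erase i₀, f i) = 0
  · refine ⟨i₀, hi₀s, hi₀, ?_, ?_, hminle⟩ <;> rw [hsum, hr0, add_zero]
    · exact hi₀
  · have hgt := hrest.resolve_left hr0
    obtain ⟨hne2, heq2⟩ := vaux_strict v hmul hmin hi₀ hr0 (by omega)
    exact ⟨i₀, hi₀s, hi₀, by rw [hsum]; exact hne2, by rw [hsum]; exact heq2, hminle⟩

end ValAux

open Polynomial in
lemma lagrange_sum {F : Type*} [Field F] {ι : Type*} [DecidableEq ι] (s : Finset ι)
    (a : ι → F) (hinj : ∀ i ∈ s, ∀ j ∈ s, a i = a j → i = j)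
    {i : ℕ} (hi : i < s.card) :
    ∑ j ∈ s, a j ^ i * (∏ l ∈ s.erase j, (a j - a l))⁻¹
      = if i = s.card - 1 then 1 else 0 := by
  classical
  set n := s.card with hn
  have hD : ∀ j ∈ s, (∏ l ∈ s.erase j, (a j - a l)) ≠ 0 := by
    intro j hj
    rw [Finset.prod_ne_zero_iff]
    intro l hl
    have hls := Finset.mem_of_mem_erase hl
    have hlne := Finset.ne_of_mem_erase hl
    exact sub_ne_zero.mpr fun h => hlne (hinj l hls j hj h.symm)
  set P : F[X] := (∑ j ∈ s, C (a j ^ i * (∏ l ∈ s.erase j, (a j - a l))⁻¹) *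
      ∏ l ∈ s.erase j, (X - C (a l))) - X ^ i with hP
  have hmon : ∀ j ∈ s, (∏ l ∈ s.erase j, (X - C (a l))).Monic :=
    fun j _ => monic_prod_of_monic _ _ fun l _ => monic_X_sub_C (a l)
  have hdeg : ∀ j ∈ s, (∏ l ∈ s.erase j, (X - C (a l))).natDegree = n - 1 := by
    intro j hj
    rw [natDegree_prod_of_monic _ _ fun l _ => monic_X_sub_C (a l)]
    simp [Finset.card_erase_of_mem hj, hn]
  have hPdeg : P.natDegree ≤ n - 1 := by
    apply le_trans (natDegree_sub_le _ _)
    rw [max_le_iff]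
    constructor
    · apply le_trans (natDegree_sum_le _ _)
      apply Finset.sup_le
      intro j hj
      apply le_trans (natDegree_C_mul_le _ _)
      rw [hdeg j hj]
    · rw [natDegree_X_pow]; omega
  have heval : ∀ m ∈ s, P.eval (a m) = 0 := by
    intro m hm
    rw [hP]
    simp only [eval_sub, eval_pow, eval_X, eval_finset_sum]
    rw [Finset.sum_eq_single m]
    · simp only [eval_mul, eval_C, eval_prod, eval_sub, eval_X]
      rw [mul_assoc, inv_mul_cancel₀ (hD m hm), mul_one, sub_self]
    · intro j hj hjm
      simp only [eval_mul, eval_C, eval_prod, eval_sub, eval_X]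
      rw [Finset.prod_eq_zero (f := fun l => a m - a l)
        (Finset.mem_erase.mpr ⟨Ne.symm hjm, hm⟩) (sub_self (a m)), mul_zero]
    · intro h; exact absurd hm h
  have hP0 : P = 0 := by
    have hfinj : Function.Injective (fun j : s => a j) := by
      intro j1 j2 h
      exact Subtype.ext (hinj j1 j1.2 j2 j2.2 h)
    apply Polynomial.eq_zero_of_natDegree_lt_card_of_eval_eq_zero P hfinj
      (fun j => heval j j.2)
    rw [Fintype.card_coe]
    omega
  have hcoeff := congrArg (fun q : F[X] => q.coeff (n - 1)) hP0
  simp only [hP, coeff_sub, coeff_zero, finset_sum_coeff, coeff_C_mul, coeff_X_pow] at hcoeff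
  have hc1 : ∀ j ∈ s, (∏ l ∈ s.erase j, (X - C (a l))).coeff (n - 1) = 1 := by
    intro j hj
    have := (hmon j hj).coeff_natDegree
    rwa [hdeg j hj] at this
  rw [Finset.sum_congr rfl (fun j hj => by rw [hc1 j hj, mul_one])] at hcoeff
  have : (if n - 1 = i then (1:F) else 0) = if i = n - 1 then 1 else 0 := by
    by_cases h : i = n - 1 <;> simp [h, eq_comm]
  rw [sub_eq_zero] at hcoeff
  rw [hcoeff, this]

lemma modaux {e a b : ℤ} {i j : ℕ} (he : 0 < e) (hi : (i:ℤ) < e) (hj : (j:ℤ) < e)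
    (h : e * a + i = e * b + j) : i = j ∧ a = b := by
  have hab : e * (a - b) = (j:ℤ) - i := by linarith
  have h1 : a - b < 1 := by
    by_contra hc
    push_neg at hc
    nlinarith [Int.ofNat_nonneg i]
  have h2 : -1 < a - b := by
    by_contra hc
    push_neg at hc
    nlinarith [Int.ofNat_nonneg j]
  have hab' : a = b := by omega
  rw [hab'] at h
  constructor
  · omega
  · exact hab'

lemma countaux1 {N : ℕ} {m : ℤ} (h1 : 1 ≤ m) (h2 : m ≤ N + 1) :
    ∑ i ∈ Finset.Icc 0 N, (if (i:ℤ) + 1 ≤ m then (1:ℤ) else 0) = m := by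
  rw [← Finset.sum_filter]
  have : Finset.filter (fun i : ℕ => (i:ℤ) + 1 ≤ m) ((Finset.Icc 0 N : Finset ℕ))
      = Finset.range m.toNat := by
    ext i
    simp only [Finset.mem_filter, Finset.mem_Icc, Finset.mem_range]
    omega
  rw [this]
  simp only [Finset.sum_const, Finset.card_range, nsmul_eq_mul, mul_one]
  omega

lemma countaux2 {N : ℕ} {m : ℤ} (h1 : 1 ≤ m) (h2 : m ≤ N + 1) :
    ∑ i ∈ Finset.Icc 1 N, (if (i:ℤ) + 1 ≤ m then (1:ℤ) else 0) = m - 1 := by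
  rw [← Finset.sum_filter]
  have : Finset.filter (fun i : ℕ => (i:ℤ) + 1 ≤ m) ((Finset.Icc 1 N : Finset ℕ))
      = Finset.Icc 1 (m.toNat - 1) := by
    ext i
    simp only [Finset.mem_filter, Finset.mem_Icc]
    omega
  rw [this]
  simp only [Finset.sum_const, Nat.card_Icc, nsmul_eq_mul, mul_one]
  omega

set_option maxHeartbeats 2000000 in
theorem stmt4 (p : ℕ) (hp : p.Prime) (k : Type*) [Field k] [IsAlgClosed k] [CharP k p]
    (L : Type*) [Field L] [Algebra (LaurentSeries k) L]
    [FiniteDimensional (LaurentSeries k) L] [IsGalois (LaurentSeries k) L]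
    -- the Galois group is a p-group:
    (hpgroup : ∃ n : ℕ, Nat.card (L ≃ₐ[LaurentSeries k] L) = p ^ n)
    -- ord_L, the normalized valuation of L:
    (ordL : L → ℤ)
    (hmul : ∀ a b : L, a ≠ 0 → b ≠ 0 → ordL (a * b) = ordL a + ordL b)
    (hmin : ∀ a b : L, a ≠ 0 → b ≠ 0 → a + b ≠ 0 → min (ordL a) (ordL b) ≤ ordL (a + b))
    (hsurj : Function.Surjective ordL)
    -- L/K is totally ramified: e = #G, ord_L extends e·ord_K:
    (hext : ∀ f : LaurentSeries k, f ≠ 0 →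
      ordL (algebraMap (LaurentSeries k) L f) =
        (Nat.card (L ≃ₐ[LaurentSeries k] L) : ℤ) * f.order)
    -- the ramification groups in lower numbering:
    (Gram : ℕ → Set (L ≃ₐ[LaurentSeries k] L))
    (hGdef : ∀ i, Gram i =
      {g | ∀ f : L, 0 ≤ ordL f → g f - f = 0 ∨ (i : ℤ) + 1 ≤ ordL (g f - f)})
    (hG0 : Gram 0 = Set.univ)
    (N : ℕ) (hN : ∀ i, N < i → Gram i = {1})
    (e d d' : ℤ)
    (he : e = (Nat.card (L ≃ₐ[LaurentSeries k] L) : ℤ))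
    (hd : d = ∑ i ∈ Finset.Icc 0 N, ((Nat.card ↥(Gram i) : ℤ) - 1))
    (hd' : d' = ∑ i ∈ Finset.Icc 1 N, ((Nat.card ↥(Gram i) : ℤ) - 1))
    (z : L) (hz : z ≠ 0) (hzord : -d' ≤ ordL z) :
    (∀ i : ℤ, i < 0 → (Algebra.trace (LaurentSeries k) L z).coeff i = 0) ∧
    ((Algebra.trace (LaurentSeries k) L z).coeff 0 ≠ 0 ↔ ordL z = -d') := by
  classical
  clear hpgroup hp
  set K := LaurentSeries k with hK
  set v := ordL with hv
  have hNat : (Nat.card (L ≃ₐ[K] L)) = Fintype.card (L ≃ₐ[K] L) := Nat.card_eq_fintype_card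
  set eN : ℕ := Fintype.card (L ≃ₐ[K] L) with heN
  have he' : e = (eN : ℤ) := by rw [he, hNat]
  have he1 : 1 ≤ eN := Fintype.card_pos
  have hepos : (0:ℤ) < e := by rw [he']; exact_mod_cast he1
  have hfinrank : Module.finrank K L = eN := (IsGalois.card_aut_eq_finrank K L).symm.trans Nat.card_eq_fintype_card
  have hKinj : Function.Injective (algebraMap K L) := (algebraMap K L).injective
  have hmap0 : ∀ c : K, c ≠ 0 → algebraMap K L c ≠ 0 := by
    intro c hc h
    exact hc (hKinj (h.trans (map_zero _).symm))
  have hvmap : ∀ c : K, c ≠ 0 → v (algebraMap K L c) = e * c.order := by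
    intro c hc; rw [he]; exact hext c hc
  -- uniformizer
  obtain ⟨t, ht0, hvt⟩ : ∃ t : L, t ≠ 0 ∧ v t = 1 := by
    obtain ⟨a, ha⟩ := hsurj 1
    by_cases ha0 : a = 0
    · obtain ⟨b, hb⟩ := hsurj 2
      obtain ⟨c, hc⟩ := hsurj (-1)
      rw [ha0] at ha
      have hb0 : b ≠ 0 := by intro h; rw [h, ha] at hb; omega
      have hc0 : c ≠ 0 := by intro h; rw [h, ha] at hc; omega
      exact ⟨b * c, mul_ne_zero hb0 hc0, by rw [hmul b c hb0 hc0, hb, hc]; norm_num⟩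
    · exact ⟨a, ha0, ha⟩
  -- consequences of (L ≃ₐ[K] L)₀ = (L ≃ₐ[K] L)
  have hram0 : ∀ (σ : L ≃ₐ[K] L) (f : L), 0 ≤ v f → σ f - f = 0 ∨ 1 ≤ v (σ f - f) := by
    intro σ f hf
    have hmem : σ ∈ Gram 0 := by rw [hG0]; trivial
    rw [hGdef 0] at hmem
    have := hmem f hf
    simpa using this
  have hσne : ∀ (σ : L ≃ₐ[K] L) (a : L), a ≠ 0 → σ a ≠ 0 := by
    intro σ a ha h
    exact ha (by simpa using σ.injective (h.trans (map_zero σ).symm))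
  have hunit : ∀ (σ : L ≃ₐ[K] L) (u : L), u ≠ 0 → v u = 0 → v (σ u) = 0 := by
    intro σ u hu hvu
    by_cases hequ : σ u = u
    · rw [hequ, hvu]
    · have hsub : σ u - u ≠ 0 := sub_ne_zero.mpr hequ
      have h1 : 1 ≤ v (σ u - u) := (hram0 σ u (le_of_eq hvu.symm)).resolve_left hsub
      have hst := vaux_strict v hmul hmin hu hsub (by omega)
      have heq : u + (σ u - u) = σ u := by ring
      rw [heq] at hst
      rw [hst.2, hvu]
  have hvsigt_ge : ∀ σ : L ≃ₐ[K] L, 1 ≤ v (σ t) := by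
    intro σ
    by_cases hequ : σ t = t
    · rw [hequ, hvt]
    · have hsub : σ t - t ≠ 0 := sub_ne_zero.mpr hequ
      have h1 : 1 ≤ v (σ t - t) :=
        (hram0 σ t (by rw [hvt]; norm_num)).resolve_left hsub
      have heq : t + (σ t - t) = σ t := by ring
      have h2 := hmin t (σ t - t) ht0 hsub (by rw [heq]; exact hσne σ t ht0)
      rw [heq, hvt] at h2
      omega
  -- the element x of K
  set xK : K := HahnSeries.single 1 1 with hxK
  have hxK0 : xK ≠ 0 := HahnSeries.single_ne_zero one_ne_zero
  have hxKord : xK.order = 1 := HahnSeries.order_single one_ne_zero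
  set xL : L := algebraMap K L xK with hxL
  have hxL0 : xL ≠ 0 := hmap0 xK hxK0
  have hvxL : v xL = e := by rw [hxL, hvmap xK hxK0, hxKord, mul_one]
  -- automorphisms preserve v
  have hge : ∀ (σ : L ≃ₐ[K] L) (w : L), w ≠ 0 → v w ≤ v (σ w) := by
    intro σ w hw0
    set q : ℤ := v w / e with hq
    set r : ℕ := (v w % e).toNat with hr'
    have hr : (r : ℤ) = v w % e := Int.toNat_of_nonneg (Int.emod_nonneg _ (ne_of_gt hepos))
    have hqr : v w = e * q + r := by rw [hr, hq]; exact (Int.mul_ediv_add_emod _ _).symm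
    have hxq : (xL ^ q) ≠ 0 := zpow_ne_zero q hxL0
    have htr : (t ^ r) ≠ 0 := pow_ne_zero r ht0
    set u : L := w * (xL ^ q)⁻¹ * (t ^ r)⁻¹ with hu
    have hu0 : u ≠ 0 := mul_ne_zero (mul_ne_zero hw0 (inv_ne_zero hxq)) (inv_ne_zero htr)
    have hvu : v u = 0 := by
      rw [hu, hmul _ _ (mul_ne_zero hw0 (inv_ne_zero hxq)) (inv_ne_zero htr),
        hmul _ _ hw0 (inv_ne_zero hxq), vaux_inv v hmul hxq, vaux_inv v hmul htr,
        vaux_zpow v hmul hxL0 q, vaux_pow v hmul ht0 r, hvxL, hvt]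
      linarith [hqr]
    have hweq : w = xL ^ q * t ^ r * u := by
      rw [hu]; field_simp
    have hσw : σ w = xL ^ q * (σ t) ^ r * σ u := by
      rw [hweq, map_mul, map_mul, map_zpow₀, map_pow, AlgEquiv.commutes]
    have hσu0 := hσne σ u hu0
    have hσt0 := hσne σ t ht0
    have hvσw : v (σ w) = e * q + r * v (σ t) := by
      rw [hσw, hmul _ _ (mul_ne_zero hxq (pow_ne_zero r hσt0)) hσu0,
        hmul _ _ hxq (pow_ne_zero r hσt0), vaux_zpow v hmul hxL0,
        vaux_pow v hmul hσt0, hunit σ u hu0 hvu, hvxL]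
      ring
    have h1 := hvsigt_ge σ
    have h2 : (0:ℤ) ≤ r := Int.ofNat_nonneg r
    nlinarith
  have hvsig : ∀ (σ : L ≃ₐ[K] L) (w : L), w ≠ 0 → v (σ w) = v w := by
    intro σ w hw0
    have h1 := hge σ w hw0
    have h2 := hge σ.symm (σ w) (hσne σ w hw0)
    rw [AlgEquiv.symm_apply_apply] at h2
    omega
  have hvsigt : ∀ σ : L ≃ₐ[K] L, v (σ t) = 1 := fun σ => by rw [hvsig σ t ht0, hvt]
  -- basis
  have hterm : ∀ (c : K) (i : ℕ), c ≠ 0 → v (algebraMap K L c * t ^ i) = e * c.order + i := by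
    intro c i hc
    rw [hmul _ _ (hmap0 c hc) (pow_ne_zero i ht0), hvmap c hc, vaux_pow v hmul ht0, hvt, mul_one]
  have hdistinct : ∀ (c : Fin eN → K), ∀ i ∈ Finset.univ, ∀ j ∈ Finset.univ,
      algebraMap K L (c i) * t ^ (i:ℕ) ≠ 0 → algebraMap K L (c j) * t ^ (j:ℕ) ≠ 0 →
      v (algebraMap K L (c i) * t ^ (i:ℕ)) = v (algebraMap K L (c j) * t ^ (j:ℕ)) → i = j := by
    intro c i _ j _ hfi hfj hveq
    have hci : c i ≠ 0 := by
      intro h; apply hfi; rw [h, map_zero, zero_mul]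
    have hcj : c j ≠ 0 := by
      intro h; apply hfj; rw [h, map_zero, zero_mul]
    rw [hterm _ _ hci, hterm _ _ hcj] at hveq
    have hie : ((i:ℕ):ℤ) < e := by rw [he']; exact_mod_cast i.isLt
    have hje : ((j:ℕ):ℤ) < e := by rw [he']; exact_mod_cast j.isLt
    exact Fin.ext (modaux hepos hie hje hveq).1
  have hbv : LinearIndependent K (fun i : Fin eN => t ^ (i : ℕ)) := by
    rw [Fintype.linearIndependent_iff]
    intro g hg
    by_contra hcon
    push_neg at hcon
    obtain ⟨i₁, hi₁⟩ := hcon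
    obtain ⟨i₀, _, hF0, hsumne, _, _⟩ := vaux_sum_distinct v hmul hmin Finset.univ
        (fun i : Fin eN => algebraMap K L (g i) * t ^ (i:ℕ))
        ⟨i₁, Finset.mem_univ _, mul_ne_zero (hmap0 _ hi₁) (pow_ne_zero _ ht0)⟩
        (hdistinct g)
    apply hsumne
    rw [← hg]
    exact Finset.sum_congr rfl fun i _ => (Algebra.smul_def _ _).symm
  haveI : Nonempty (Fin eN) := ⟨⟨0, he1⟩⟩
  set b : Module.Basis (Fin eN) K L := basisOfLinearIndependentOfCardEqFinrank hbv
      (by simp [hfinrank]) with hbdef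
  have hb : ∀ i, b i = t ^ (i:ℕ) := fun i => by
    rw [hbdef, coe_basisOfLinearIndependentOfCardEqFinrank]
  have hrepr : ∀ y : L, y = ∑ i : Fin eN, algebraMap K L (b.repr y i) * t ^ (i:ℕ) := by
    intro y
    conv_lhs => rw [← b.sum_repr y]
    exact Finset.sum_congr rfl fun i _ => by rw [hb i, Algebra.smul_def]
  have hval : ∀ (c : Fin eN → K) (y : L),
      y = (∑ i : Fin eN, algebraMap K L (c i) * t ^ (i:ℕ)) → y ≠ 0 →
      ∃ i₀ : Fin eN, c i₀ ≠ 0 ∧ v y = e * (c i₀).order + i₀ ∧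
        ∀ j : Fin eN, c j ≠ 0 → v y ≤ e * (c j).order + j := by
    intro c y hy hy0
    have hne : ∃ i ∈ Finset.univ, algebraMap K L (c i) * t ^ (i:ℕ) ≠ 0 := by
      by_contra hc
      push_neg at hc
      exact hy0 (hy.trans (Finset.sum_eq_zero hc))
    obtain ⟨i₀, _, hF0, hsne, hveq, hminle⟩ := vaux_sum_distinct v hmul hmin Finset.univ _
      hne (hdistinct c)
    have hc0 : c i₀ ≠ 0 := by
      intro h; apply hF0; rw [h, map_zero, zero_mul]
    refine ⟨i₀, hc0, ?_, ?_⟩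
    · rw [hy, hveq, hterm _ _ hc0]
    · intro j hcj
      have := hminle j (Finset.mem_univ j) (mul_ne_zero (hmap0 _ hcj) (pow_ne_zero _ ht0))
      rw [hterm _ _ hcj] at this
      rw [hy, hveq, hterm _ _ hc0]
      rw [← hterm _ _ hc0]
      exact this
  have hfix : ∀ σ : L ≃ₐ[K] L, σ t = t → ∀ w, σ w = w := by
    intro σ hσt w
    conv_lhs => rw [hrepr w]
    rw [map_sum]
    conv_rhs => rw [hrepr w]
    refine Finset.sum_congr rfl fun i _ => ?_
    rw [map_mul, map_pow, hσt, AlgEquiv.commutes]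
  have hfix1 : ∀ σ : L ≃ₐ[K] L, σ t = t → σ = 1 := by
    intro σ h
    exact AlgEquiv.ext fun w => (hfix σ h w).trans (AlgEquiv.one_apply w).symm
  have htne : ∀ σ : L ≃ₐ[K] L, σ ≠ 1 → σ t - t ≠ 0 :=
    fun σ h => sub_ne_zero.mpr fun heq => h (hfix1 σ heq)
  -- reduction to the uniformizer
  have hred : ∀ (σ : L ≃ₐ[K] L) (f : L), 0 ≤ v f → σ f - f = 0 ∨ v (σ t - t) ≤ v (σ f - f) := by
    intro σ f hvf
    by_cases hf0 : f = 0
    · left; rw [hf0, map_zero, sub_zero]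
    by_cases hff : σ f = f
    · left; rw [hff, sub_self]
    set c := b.repr f with hcf
    obtain ⟨i₀, hc₀, hvy, hminle⟩ := hval c f (hrepr f) hf0
    have hord : ∀ j : Fin eN, c j ≠ 0 → 0 ≤ (c j).order := by
      intro j hcj
      have h1 := hminle j hcj
      have hj : ((j:ℕ):ℤ) < e := by rw [he']; exact_mod_cast j.isLt
      by_contra hneg
      push_neg at hneg
      have h2 : e * (c j).order ≤ e * (-1) :=
        mul_le_mul_of_nonneg_left (by omega) hepos.le
      linarith
    have hdiff : σ f - f = ∑ i : Fin eN,
        algebraMap K L (c i) * ((σ t) ^ (i:ℕ) - t ^ (i:ℕ)) := by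
      conv_lhs => rw [hrepr f]
      rw [map_sum, ← Finset.sum_sub_distrib]
      refine Finset.sum_congr rfl fun i _ => ?_
      rw [map_mul, map_pow, AlgEquiv.commutes]
      ring
    rw [hdiff]
    refine vaux_sum_ge v hmin Finset.univ _ (v (σ t - t)) ?_
    intro i _
    by_cases hci : c i = 0
    · left; rw [hci, map_zero, zero_mul]
    by_cases hpow : (σ t) ^ (i:ℕ) - t ^ (i:ℕ) = 0
    · left; rw [hpow, mul_zero]
    right
    have hσtne : σ t - t ≠ 0 := by
      intro h0; apply hpow
      rw [sub_eq_zero] at h0 ⊢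
      rw [h0]
    have hgeom := geom_sum₂_mul (σ t) t (i:ℕ)
    have hgne : (∑ m ∈ Finset.range (i:ℕ), (σ t)^m * t^((i:ℕ) - 1 - m)) ≠ 0 := by
      intro h0; apply hpow; rw [← hgeom, h0, zero_mul]
    have hgv : 0 ≤ v (∑ m ∈ Finset.range (i:ℕ), (σ t)^m * t^((i:ℕ)-1-m)) := by
      have hbd : ∀ m ∈ Finset.range (i:ℕ), (σ t)^m * t^((i:ℕ)-1-m) = 0 ∨
          (0:ℤ) ≤ v ((σ t)^m * t^((i:ℕ)-1-m)) := by
        intro m _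
        right
        rw [hmul _ _ (pow_ne_zero _ (hσne σ t ht0)) (pow_ne_zero _ ht0),
          vaux_pow v hmul (hσne σ t ht0), vaux_pow v hmul ht0, hvsigt σ, hvt]
        positivity
      rcases vaux_sum_ge v hmin (Finset.range (i:ℕ)) _ 0 hbd with h0 | h0
      · exact absurd h0 hgne
      · exact h0
    rw [hmul _ _ (hmap0 _ hci) hpow, ← hgeom, hmul _ _ hgne hσtne, hvmap _ hci]
    have h3 := hord i hci
    have h4 : 0 ≤ e * (c i).order := mul_nonneg hepos.le h3
    linarith
  -- characterization of the ramification groups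
  have hGiff : ∀ (i : ℕ) (σ : L ≃ₐ[K] L), σ ∈ Gram i ↔ (σ = 1 ∨ (i:ℤ) + 1 ≤ v (σ t - t)) := by
    intro i σ
    constructor
    · intro hmem
      by_cases h1 : σ = 1
      · left; exact h1
      · right
        rw [hGdef i] at hmem
        exact (hmem t (by rw [hvt]; norm_num)).resolve_left (htne σ h1)
    · intro h
      rw [hGdef i]
      intro f hf
      rcases h with h1 | hine
      · left; rw [h1, AlgEquiv.one_apply, sub_self]
      · rcases hred σ f hf with h0 | hle
        · left; exact h0
        · right; omega
  set U : ℕ → Finset (L ≃ₐ[K] L) := fun i =>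
    Finset.univ.filter (fun σ => σ ≠ 1 ∧ (i:ℤ) + 1 ≤ v (σ t - t)) with hU
  have hcardGram : ∀ i : ℕ, (Nat.card ↥(Gram i) : ℤ) = (U i).card + 1 := by
    intro i
    have hset : Gram i = ↑(insert (1 : L ≃ₐ[K] L) (U i)) := by
      ext σ
      rw [hGiff i σ]
      simp only [Finset.coe_insert, Set.mem_insert_iff, Finset.mem_coe, hU,
        Finset.mem_filter, Finset.mem_univ, true_and]
      tauto
    rw [hset, Nat.card_coe_set_eq, Set.ncard_coe_finset,
      Finset.card_insert_of_notMem (by simp [hU])]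
    push_cast; ring
  set V : Finset (L ≃ₐ[K] L) := Finset.univ.filter (fun σ => σ ≠ 1) with hV
  have hVcard : (V.card : ℤ) = e - 1 := by
    rw [hV, Finset.filter_ne', Finset.card_erase_of_mem (Finset.mem_univ _), Finset.card_univ]
    rw [he']
    have := he1
    push_cast [heN]
    omega
  have hiσbound : ∀ σ ∈ V, 1 ≤ v (σ t - t) ∧ v (σ t - t) ≤ (N:ℤ) + 1 := by
    intro σ hσ
    have hσ1 : σ ≠ 1 := by
      rw [hV, Finset.mem_filter] at hσ
      exact hσ.2
    constructor
    · have h := (hGiff 0 σ).mp (by rw [hG0]; trivial)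
      rcases h with h | h
      · exact absurd h hσ1
      · push_cast at h; omega
    · have hnot : σ ∉ Gram (N+1) := by
        rw [hN (N+1) (by omega)]
        simpa using hσ1
      rw [hGiff] at hnot
      push_neg at hnot
      have h2 := hnot.2
      push_cast at h2 ⊢
      omega
  have hUcard : ∀ i : ℕ, ((U i).card : ℤ)
      = ∑ σ ∈ V, (if (i:ℤ) + 1 ≤ v (σ t - t) then (1:ℤ) else 0) := by
    intro i
    rw [← Finset.sum_filter]
    have hUV : (U i) = V.filter (fun σ => (i:ℤ) + 1 ≤ v (σ t - t)) := by
      rw [hU, hV, Finset.filter_filter]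
    rw [hUV]
    simp
  have hstepc : ∀ i : ℕ, ((Nat.card ↥(Gram i) : ℤ) - 1)
      = ∑ σ ∈ V, (if (i:ℤ) + 1 ≤ v (σ t - t) then (1:ℤ) else 0) := by
    intro i
    rw [hcardGram i, ← hUcard i]
    ring
  have hd2 : d = ∑ σ ∈ V, v (σ t - t) := by
    rw [hd]
    calc ∑ i ∈ Finset.Icc 0 N, ((Nat.card ↥(Gram i) : ℤ) - 1)
        = ∑ i ∈ Finset.Icc 0 N, ∑ σ ∈ V,
            (if (i:ℤ) + 1 ≤ v (σ t - t) then (1:ℤ) else 0) :=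
          Finset.sum_congr rfl fun i _ => hstepc i
      _ = ∑ σ ∈ V, ∑ i ∈ Finset.Icc 0 N,
            (if (i:ℤ) + 1 ≤ v (σ t - t) then (1:ℤ) else 0) := Finset.sum_comm
      _ = ∑ σ ∈ V, v (σ t - t) :=
          Finset.sum_congr rfl fun σ hσ => countaux1 (hiσbound σ hσ).1 (hiσbound σ hσ).2
  have hd'2 : d' = ∑ σ ∈ V, (v (σ t - t) - 1) := by
    rw [hd']
    calc ∑ i ∈ Finset.Icc 1 N, ((Nat.card ↥(Gram i) : ℤ) - 1)
        = ∑ i ∈ Finset.Icc 1 N, ∑ σ ∈ V,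
            (if (i:ℤ) + 1 ≤ v (σ t - t) then (1:ℤ) else 0) :=
          Finset.sum_congr rfl fun i _ => hstepc i
      _ = ∑ σ ∈ V, ∑ i ∈ Finset.Icc 1 N,
            (if (i:ℤ) + 1 ≤ v (σ t - t) then (1:ℤ) else 0) := Finset.sum_comm
      _ = ∑ σ ∈ V, (v (σ t - t) - 1) :=
          Finset.sum_congr rfl fun σ hσ => countaux2 (hiσbound σ hσ).1 (hiσbound σ hσ).2
  have hdd' : d = d' + (e - 1) := by
    rw [hd2, hd'2, ← hVcard, Finset.sum_sub_distrib]
    simp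
  -- injectivity of σ ↦ σ t
  have htinj : ∀ σ τ : L ≃ₐ[K] L, σ t = τ t → σ = τ := by
    intro σ τ h
    have h0 : (σ.trans τ.symm) t = t := by
      rw [AlgEquiv.trans_apply, h, AlgEquiv.symm_apply_apply]
    have h1 := hfix1 _ h0
    apply AlgEquiv.ext
    intro w
    have h2 : τ.symm (σ w) = w := by
      rw [← AlgEquiv.trans_apply, h1, AlgEquiv.one_apply]
    calc σ w = τ (τ.symm (σ w)) := (τ.apply_symm_apply _).symm
    _ = τ w := by rw [h2]
  set D : (L ≃ₐ[K] L) → L := fun σ => ∏ τ ∈ Finset.univ.erase σ, (σ t - τ t) with hD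
  have hD0 : ∀ σ, D σ ≠ 0 := by
    intro σ
    rw [hD]
    rw [Finset.prod_ne_zero_iff]
    intro τ hτ
    exact sub_ne_zero.mpr fun h => (Finset.ne_of_mem_erase hτ) ((htinj σ τ h).symm)
  have hvD1 : v (D 1) = d := by
    have hfact : ∀ τ ∈ Finset.univ.erase (1 : L ≃ₐ[K] L), (1 : L ≃ₐ[K] L) t - τ t ≠ 0 := by
      intro τ hτ
      have hτ1 : τ ≠ 1 := Finset.ne_of_mem_erase hτ
      rw [AlgEquiv.one_apply]
      intro h
      rw [sub_eq_zero] at h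
      exact hτ1 (htinj τ 1 (by rw [AlgEquiv.one_apply]; exact h.symm))
    rw [hD]
    rw [vaux_prod v hmul _ _ hfact, hd2]
    have hVE : V = Finset.univ.erase (1 : L ≃ₐ[K] L) := by rw [hV, Finset.filter_ne']
    rw [hVE]
    refine Finset.sum_congr rfl fun τ hτ => ?_
    rw [AlgEquiv.one_apply]
    have h1 : t - τ t = -(τ t - t) := by ring
    rw [h1, vaux_neg v hmul]
    have hτ1 : τ ≠ 1 := Finset.ne_of_mem_erase hτ
    exact htne τ hτ1
  have hDσ : ∀ σ : L ≃ₐ[K] L, σ (D 1) = D σ := by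
    intro σ
    rw [hD]
    simp only
    rw [map_prod]
    refine Finset.prod_bij' (fun τ _ => τ.trans σ) (fun ρ _ => ρ.trans σ.symm) ?_ ?_ ?_ ?_ ?_
    · intro τ hτ
      rw [Finset.mem_erase]
      refine ⟨?_, Finset.mem_univ _⟩
      intro h
      have hτ1 : τ ≠ 1 := Finset.ne_of_mem_erase hτ
      apply hτ1
      apply AlgEquiv.ext
      intro w
      have := congrArg (fun ρ : L ≃ₐ[K] L => ρ w) h
      simp only [AlgEquiv.trans_apply] at this
      rw [AlgEquiv.one_apply]
      exact σ.injective this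
    · intro ρ hρ
      rw [Finset.mem_erase]
      refine ⟨?_, Finset.mem_univ _⟩
      intro h
      have hρσ : ρ ≠ σ := Finset.ne_of_mem_erase hρ
      apply hρσ
      apply AlgEquiv.ext
      intro w
      have := congrArg (fun ρ' : L ≃ₐ[K] L => ρ' w) h
      simp only [AlgEquiv.trans_apply, AlgEquiv.one_apply] at this
      have h2 := congrArg σ this
      rwa [AlgEquiv.apply_symm_apply] at h2
    · intro τ hτ
      apply AlgEquiv.ext
      intro w
      simp [AlgEquiv.trans_apply]
    · intro ρ hρ
      apply AlgEquiv.ext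
      intro w
      simp [AlgEquiv.trans_apply]
    · intro τ hτ
      rw [map_sub, AlgEquiv.one_apply, AlgEquiv.trans_apply]
  have htrw : ∀ i : ℕ, i < eN →
      Algebra.trace K L (t ^ i * (D 1)⁻¹) = if i = eN - 1 then 1 else 0 := by
    intro i hi
    apply hKinj
    rw [trace_eq_sum_automorphisms]
    have hterm2 : ∀ σ : L ≃ₐ[K] L, σ (t ^ i * (D 1)⁻¹)
        = (σ t) ^ i * (∏ τ ∈ Finset.univ.erase σ, (σ t - τ t))⁻¹ := by
      intro σ
      rw [map_mul, map_pow, map_inv₀, hDσ σ, hD]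
    rw [Finset.sum_congr rfl (fun σ _ => hterm2 σ)]
    rw [lagrange_sum Finset.univ (fun σ : L ≃ₐ[K] L => σ t)
      (fun σ _ τ _ h => htinj σ τ h) (by rwa [Finset.card_univ])]
    rw [Finset.card_univ, ← heN]
    split_ifs <;> simp
  -- final assembly
  set y : L := z * D 1 with hy
  have hy0 : y ≠ 0 := mul_ne_zero hz (hD0 1)
  have hvy : v y = v z + d := by rw [hy, hmul _ _ hz (hD0 1), hvD1]
  set c : Fin eN → K := fun i => b.repr y i with hcdef
  obtain ⟨j₁, hj₁0, hj₁v, hjle⟩ := hval c y (hrepr y) hy0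
  have hi₀lt : eN - 1 < eN := by omega
  set i₀ : Fin eN := ⟨eN - 1, hi₀lt⟩ with hi₀
  have hi₀cast : ((i₀:ℕ):ℤ) = e - 1 := by
    rw [hi₀, he']
    simp
    omega
  have hvyge : e - 1 ≤ v y := by rw [hvy, hdd']; linarith
  have htrz : Algebra.trace K L z = c i₀ := by
    have hzeq : z = ∑ i : Fin eN, c i • (t ^ (i:ℕ) * (D 1)⁻¹) := by
      have hzy : z = y * (D 1)⁻¹ := by
        rw [hy, mul_assoc, mul_inv_cancel₀ (hD0 1), mul_one]
      rw [hzy]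
      conv_lhs => rw [hrepr y]
      rw [Finset.sum_mul]
      refine Finset.sum_congr rfl fun i _ => ?_
      rw [Algebra.smul_def]
      ring
    rw [hzeq, map_sum]
    have hstep : ∀ i : Fin eN, Algebra.trace K L (c i • (t ^ (i:ℕ) * (D 1)⁻¹))
        = if i = i₀ then c i else 0 := by
      intro i
      rw [LinearMap.map_smul, htrw (i:ℕ) i.isLt, smul_eq_mul]
      have hcond : ((i:ℕ) = eN - 1) ↔ (i = i₀) := by
        rw [hi₀, Fin.ext_iff]
      by_cases h : i = i₀
      · rw [if_pos (hcond.mpr h), if_pos h, mul_one]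
      · rw [if_neg (fun hh => h (hcond.mp hh)), if_neg h, mul_zero]
    rw [Finset.sum_congr rfl (fun i _ => hstep i), Finset.sum_ite_eq' Finset.univ i₀ c,
      if_pos (Finset.mem_univ i₀)]
  have hordi₀ : c i₀ ≠ 0 → 0 ≤ (c i₀).order := by
    intro hc0
    have h1 := hjle i₀ hc0
    rw [hi₀cast] at h1
    by_contra hneg
    push_neg at hneg
    have h2 : e * (c i₀).order ≤ e * (-1) :=
      mul_le_mul_of_nonneg_left (by omega) hepos.le
    linarith
  constructor
  · intro i hi
    rw [htrz]
    by_cases hc0 : c i₀ = 0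
    · rw [hc0]
      simp
    · exact HahnSeries.coeff_eq_zero_of_lt_order (lt_of_lt_of_le hi (hordi₀ hc0))
  · constructor
    · intro hcoeff
      rw [htrz] at hcoeff
      have hc0 : c i₀ ≠ 0 := by
        intro h; rw [h] at hcoeff; simp at hcoeff
      have hle0 : (c i₀).order ≤ 0 := HahnSeries.order_le_of_coeff_ne_zero hcoeff
      have hord0 : (c i₀).order = 0 := le_antisymm hle0 (hordi₀ hc0)
      have h1 := hjle i₀ hc0
      rw [hord0, hi₀cast, mul_zero, zero_add] at h1
      have hvye : v y = e - 1 := le_antisymm h1 hvyge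
      rw [hvy] at hvye
      linarith [hdd']
    · intro hvz
      have hvye : v y = e - 1 := by rw [hvy, hvz, hdd']; ring
      have hj₁e : ((j₁:ℕ):ℤ) < e := by rw [he']; exact_mod_cast j₁.isLt
      have hi₀e : ((i₀:ℕ):ℤ) < e := by rw [he']; exact_mod_cast i₀.isLt
      have heq2 : e * (c j₁).order + ((j₁:ℕ):ℤ) = e * 0 + ((i₀:ℕ):ℤ) := by
        rw [← hj₁v, hvye, mul_zero, zero_add, hi₀cast]
      have hmod := modaux hepos hj₁e hi₀e heq2
      have hj₁i₀ : j₁ = i₀ := Fin.ext hmod.1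
      rw [htrz, ← hj₁i₀]
      have hcoeffo := HahnSeries.coeff_order_eq_zero.not.mpr hj₁0
      rwa [hmod.2] at hcoeffo
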